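/- Let s > 0, E > 0, B = s·log(1 + E/s), and θ ≥ φ > 0. If T* > 0 is the unique solution of φ·B = T*·log(1 + θ·E/T*), then T* ≤ φ·s. -/

import Mathlib

lemma Tlog_strictMono (c : ℝ) (hc : 0 < c) {a b : ℝ} (ha : 0 < a) (hab : a < b) :
    a * Real.log (1 + c / a) < b * Real.log (1 + c / b) := by
  have hb : 0 < b := ha.trans hab
  have hx : (1 : ℝ) + c / a ∈ Set.Ioi (0 : ℝ) := by
    simp only [Set.mem_Ioi]; positivity
  have hy : (1 : ℝ) ∈ Set.Ioi (0 : ℝ) := by norm_num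
  have hne : (1 : ℝ) + c / a ≠ 1 := by
    have : 0 < c / a := by positivity
    linarith
  have hl1 : 0 < a / b := by positivity
  have hl2 : 0 < 1 - a / b := by
    have : a / b < 1 := (div_lt_one hb).2 hab
    linarith
  have key := strictConcaveOn_log_Ioi.2 hx hy hne hl1 hl2 (by ring)
  have heq : (a / b) • (1 + c / a) + (1 - a / b) • (1 : ℝ) = 1 + c / b := by
    simp only [smul_eq_mul]
    field_simp
    ring
  rw [heq, Real.log_one, smul_eq_mul, smul_eq_mul, mul_zero, add_zero] at key
  have := (mul_lt_mul_iff_right₀ hb).2 key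
  rw [← mul_assoc, mul_div_cancel₀ _ hb.ne'] at this
  linarith

theorem lazy_residual_time (s E B θ φ Tstar : ℝ) (hs : 0 < s) (hE : 0 < E)
    (hB : B = s * Real.log (1 + E / s)) (hφ : 0 < φ) (hθφ : φ ≤ θ)
    (hT : 0 < Tstar) (hTeq : φ * B = Tstar * Real.log (1 + θ * E / Tstar)) :
    Tstar ≤ φ * s := by
  have hθ : 0 < θ := hφ.trans_le hθφ
  have hc : 0 < θ * E := by positivity
  by_contra h
  push_neg at h
  have hφs : 0 < φ * s := by positivity
  have hmono := Tlog_strictMono (θ * E) hc hφs h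
  -- f(φs) ≥ φ * B
  have hlog : Real.log (1 + E / s) ≤ Real.log (1 + θ * E / (φ * s)) := by
    apply Real.log_le_log (by positivity)
    have : E / s ≤ θ * E / (φ * s) := by
      rw [div_le_div_iff₀ hs hφs]
      have h1 : φ * E ≤ θ * E := by nlinarith
      calc E * (φ * s) = (φ * E) * s := by ring
        _ ≤ (θ * E) * s := by nlinarith
    linarith
  have hge : φ * B ≤ φ * s * Real.log (1 + θ * E / (φ * s)) := by
    rw [hB]
    calc φ * (s * Real.log (1 + E / s)) = φ * s * Real.log (1 + E / s) := by ring
      _ ≤ φ * s * Real.log (1 + θ * E / (φ * s)) := by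
          exact mul_le_mul_of_nonneg_left hlog hφs.le
  rw [hTeq] at hge
  linarith
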